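/- Let ρ, E > 0 and let ℳ₀(v) = ρ(2πE)^{−3/2} exp(−|v|²/(2E)) be the Maxwellian with mass ρ, zero momentum and energy 3ρE. Then there exists a constant C > 0 depending only on ρ and E such that for every ε, a, b > 0 with εa ≤ 2^{5/2}/3 for which ℳ_ε(v) = a e^{−b|v|²}/(1+εa e^{−b|v|²}) satisfies ∫ ℳ_ε dv = ρ and ∫ |v|² ℳ_ε dv = 3ρE, one has |H(ℳ₀) − H(ℳ_ε)| ≤ C ε, where H(g) = ∫ g log g dv denotes the Boltzmann entropy. -/

import Mathlib

open MeasureTheory Real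

noncomputable section

abbrev E3 := EuclideanSpace ℝ (Fin 3)

/-- Maxwellian `M(v) = a e^{-b|v|²}`. -/
def Mw (a b : ℝ) (v : E3) : ℝ := a * exp (-b * ‖v‖ ^ 2)

/-- Fermi–Dirac statistics `ℳ_ε = M/(1+εM)`. -/
def FD (ε a b : ℝ) (v : E3) : ℝ := Mw a b v / (1 + ε * Mw a b v)

/-- The Maxwellian `ℳ₀` with mass `ρ`, zero momentum and energy `3ρE`. -/
def M0 (ρ E : ℝ) (v : E3) : ℝ :=
  ρ * (2 * π * E) ^ (-(3 : ℝ) / 2) * exp (-‖v‖ ^ 2 / (2 * E))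

/-- Boltzmann entropy `H(g) = ∫ g log g`. -/
def boltzEnt (g : E3 → ℝ) : ℝ := ∫ v, g v * log (g v)

lemma gauss_int {b : ℝ} (hb : 0 < b) :
    ∫ v : E3, exp (-b * ‖v‖ ^ 2) = (π / b) ^ ((3:ℝ)/2) := by
  rw [GaussianFourier.integral_rexp_neg_mul_sq_norm hb, finrank_euclideanSpace_fin]
  norm_num

lemma gauss_integrable {b : ℝ} (hb : 0 < b) :
    Integrable fun v : E3 => exp (-b * ‖v‖ ^ 2) := by
  have h := (GaussianFourier.integrable_cexp_neg_mul_sq_norm_add (b := (b:ℂ))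
    (by simpa using hb) 0 (0 : E3)).norm
  refine h.congr (Filter.Eventually.of_forall fun v => ?_)
  simp [Complex.norm_exp, ← Complex.ofReal_pow]

lemma gauss_integrable2 {b : ℝ} (hb : 0 < b) :
    Integrable fun v : E3 => ‖v‖ ^ 2 * exp (-b * ‖v‖ ^ 2) := by
  refine Integrable.mono' (((gauss_integrable (b := b/2) (by positivity)).const_mul (2/b)))
    ?_ (Filter.Eventually.of_forall fun v => ?_)
  · exact (Continuous.mul (by continuity) (by continuity)).aestronglyMeasurable
  · have h0 : (0:ℝ) ≤ ‖v‖ ^ 2 * exp (-b * ‖v‖ ^ 2) := by positivity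
    rw [Real.norm_of_nonneg h0]
    have h1 : b/2 * ‖v‖ ^ 2 ≤ exp (b/2 * ‖v‖ ^ 2) := by
      have := Real.add_one_le_exp (b/2 * ‖v‖ ^ 2); nlinarith
    have h2 : ‖v‖ ^ 2 ≤ 2/b * exp (b/2 * ‖v‖ ^ 2) := by
      calc ‖v‖ ^ 2 = 2/b * (b/2 * ‖v‖ ^ 2) := by field_simp
        _ ≤ 2/b * exp (b/2 * ‖v‖ ^ 2) :=
          mul_le_mul_of_nonneg_left h1 (by positivity)
    calc ‖v‖ ^ 2 * exp (-b * ‖v‖ ^ 2)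
        ≤ 2/b * exp (b/2 * ‖v‖ ^ 2) * exp (-b * ‖v‖ ^ 2) :=
          mul_le_mul_of_nonneg_right h2 (exp_nonneg _)
      _ = 2/b * exp (-(b/2) * ‖v‖ ^ 2) := by rw [mul_assoc, ← Real.exp_add]; ring_nf

lemma oneD_moment {b : ℝ} (hb : 0 < b) (q : ℕ) :
    ∫ x in Set.Ioi (0:ℝ), x ^ q * exp (-b * x ^ 2) =
      b ^ (-((q:ℝ) + 1) / 2) * (1/2) * Gamma (((q:ℝ) + 1) / 2) := by
  rw [← integral_rpow_mul_exp_neg_mul_rpow two_pos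
    (lt_of_lt_of_le neg_one_lt_zero (Nat.cast_nonneg q)) hb]
  refine setIntegral_congr_fun measurableSet_Ioi fun x hx => ?_
  rw [Real.rpow_natCast, show ((2:ℝ)) = ((2:ℕ):ℝ) by norm_num, Real.rpow_natCast]

lemma gauss_moment {b : ℝ} (hb : 0 < b) :
    ∫ v : E3, ‖v‖ ^ 2 * exp (-b * ‖v‖ ^ 2) = 3/(2*b) * ∫ v : E3, exp (-b * ‖v‖ ^ 2) := by
  have p4 := integral_fun_norm_addHaar (volume : Measure E3)
    (fun y : ℝ => y ^ 2 * exp (-b * y ^ 2))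
  have p0 := integral_fun_norm_addHaar (volume : Measure E3)
    (fun y : ℝ => exp (-b * y ^ 2))
  beta_reduce at p4 p0
  rw [finrank_euclideanSpace_fin] at p4 p0
  rw [p4, p0]
  have e4 : ∫ y in Set.Ioi (0:ℝ), y ^ (3-1) • (y ^ 2 * exp (-b * y ^ 2))
      = ∫ y in Set.Ioi (0:ℝ), y ^ 4 * exp (-b * y ^ 2) := by
    refine setIntegral_congr_fun measurableSet_Ioi fun x hx => ?_
    simp only [smul_eq_mul]; ring
  have e2 : ∫ y in Set.Ioi (0:ℝ), y ^ (3-1) • exp (-b * y ^ 2)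
      = ∫ y in Set.Ioi (0:ℝ), y ^ 2 * exp (-b * y ^ 2) := by
    refine setIntegral_congr_fun measurableSet_Ioi fun x hx => ?_
    simp only [smul_eq_mul]
  rw [e4, e2, oneD_moment hb 4, oneD_moment hb 2]
  have hG : Gamma ((5:ℝ)/2) = 3/2 * Gamma ((3:ℝ)/2) := by
    rw [show (5:ℝ)/2 = 3/2 + 1 by norm_num, Gamma_add_one (by norm_num)]
  have hbp : b ^ (-(5:ℝ)/2) = b⁻¹ * b ^ (-(3:ℝ)/2) := by
    rw [← Real.rpow_neg_one b, ← Real.rpow_add hb]; norm_num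
  simp only [nsmul_eq_mul, smul_eq_mul]
  push_cast
  rw [show -((4:ℝ)+1)/2 = -(5:ℝ)/2 by norm_num, show ((4:ℝ)+1)/2 = (5:ℝ)/2 by norm_num,
     show -((2:ℝ)+1)/2 = -(3:ℝ)/2 by norm_num, show ((2:ℝ)+1)/2 = (3:ℝ)/2 by norm_num, hG, hbp]
  field_simp

lemma Mw_integrable {a b : ℝ} (hb : 0 < b) : Integrable (Mw a b) :=
  (gauss_integrable hb).const_mul a

lemma Mw_integrable2 {a b : ℝ} (hb : 0 < b) :
    Integrable fun v : E3 => ‖v‖ ^ 2 * Mw a b v := by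
  have h := (gauss_integrable2 hb).const_mul a
  refine h.congr (Filter.Eventually.of_forall fun v => ?_)
  simp only [Mw]; ring

lemma int_Mw {a b : ℝ} (hb : 0 < b) :
    ∫ v, Mw a b v = a * (π/b) ^ ((3:ℝ)/2) := by
  simp only [Mw]
  rw [integral_const_mul, gauss_int hb]

lemma int_Mw2 {a b : ℝ} (hb : 0 < b) :
    ∫ v : E3, ‖v‖ ^ 2 * Mw a b v = 3/(2*b) * (a * (π/b) ^ ((3:ℝ)/2)) := by
  have e : ∀ v : E3, ‖v‖ ^ 2 * Mw a b v = a * (‖v‖ ^ 2 * exp (-b * ‖v‖ ^ 2)) := by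
    intro v; simp only [Mw]; ring
  simp only [e]
  rw [integral_const_mul, gauss_moment hb, gauss_int hb]; ring

lemma entMw {a b : ℝ} (ha : 0 < a) (hb : 0 < b) :
    boltzEnt (Mw a b) = (log a - 3/2) * (a * (π/b) ^ ((3:ℝ)/2)) := by
  have hpt : ∀ v : E3, Mw a b v * log (Mw a b v)
      = log a * Mw a b v - b * (‖v‖ ^ 2 * Mw a b v) := by
    intro v
    have h1 : log (Mw a b v) = log a + (-b * ‖v‖ ^ 2) := by
      rw [Mw, log_mul ha.ne' (exp_ne_zero _), log_exp]
    rw [h1]; ring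
  rw [boltzEnt]
  simp only [hpt]
  rw [integral_sub ((Mw_integrable hb).const_mul _) ((Mw_integrable2 hb).const_mul _),
    integral_const_mul, integral_const_mul, int_Mw hb, int_Mw2 hb]
  field_simp

lemma loglin {t : ℝ} (ht : 2/3 ≤ t) : |log t| ≤ 3/2 * |t - 1| := by
  have ht0 : 0 < t := by linarith
  rcases le_or_gt 1 t with h | h
  · rw [abs_of_nonneg (log_nonneg h), abs_of_nonneg (by linarith)]
    have := log_le_sub_one_of_pos ht0
    linarith
  · rw [abs_of_nonpos (log_nonpos ht0.le h.le), abs_of_nonpos (by linarith)]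
    have h1 : log t⁻¹ ≤ t⁻¹ - 1 := log_le_sub_one_of_pos (by positivity)
    rw [Real.log_inv] at h1
    have h2 : t⁻¹ ≤ 3/2 := by
      rw [show (3:ℝ)/2 = (2/3 : ℝ)⁻¹ by norm_num]
      gcongr <;> norm_num
    have h3 : t⁻¹ - 1 = t⁻¹ * (1 - t) := by
      field_simp
    nlinarith [mul_le_mul_of_nonneg_right h2 (by linarith : (0:ℝ) ≤ 1 - t)]

set_option maxHeartbeats 1000000 in
/-- The Boltzmann entropies of the Maxwellian `ℳ₀` and of the Fermi–Dirac statistics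
`ℳ_ε` sharing the same mass `ρ`, zero momentum and energy `3ρE` differ by at most
`Cε`, with `C` depending only on `ρ` and `E`, provided `εa ≤ 2^{5/2}/3`. -/
theorem stmt18 (ρ E : ℝ) (hρ : 0 < ρ) (hE : 0 < E) :
    ∃ C : ℝ, 0 < C ∧
      ∀ ε a b : ℝ, 0 < ε → 0 < a → 0 < b →
        ε * a ≤ 2 ^ ((5 : ℝ) / 2) / 3 →
        (∫ v, FD ε a b v) = ρ →
        (∫ v, ‖v‖ ^ 2 * FD ε a b v) = 3 * ρ * E →
        |boltzEnt (M0 ρ E) - boltzEnt (FD ε a b)| ≤ C * ε := by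
  have hA : (0:ℝ) < 3*ρ*((3/(2*E))/π) ^ ((3:ℝ)/2) := by positivity
  set A : ℝ := 3*ρ*((3/(2*E))/π) ^ ((3:ℝ)/2) with hAdef
  set c₀ : ℝ := A * (3*ρ) with hc0def
  have hc0 : 0 < c₀ := by positivity
  refine ⟨17*c₀ + 1, by positivity, ?_⟩
  intro ε a b hε ha hb hεa hmass henergy
  set κ : ℝ := (2:ℝ) ^ (-(3:ℝ)/2) with hκdef
  have hκ : 0 < κ := by positivity
  have hκ1 : κ ≤ 1 := by
    rw [hκdef]
    exact Real.rpow_le_one_of_one_le_of_nonpos one_le_two (by norm_num)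
  have hεaκ : ε * a * κ ≤ 2/3 := by
    have h1 : ε * a * κ ≤ (2 ^ ((5:ℝ)/2) / 3) * κ := by
      exact mul_le_mul_of_nonneg_right hεa hκ.le
    have h2 : (2 ^ ((5:ℝ)/2) / 3) * κ = 2/3 := by
      rw [hκdef, div_mul_eq_mul_div, ← Real.rpow_add two_pos,
        show (5:ℝ)/2 + -(3:ℝ)/2 = 1 by norm_num, Real.rpow_one]
    linarith
  set G : ℝ := a * (π/b) ^ ((3:ℝ)/2) with hGdef
  have hπb : 0 < π/b := by positivity
  have hGpos : 0 < G := by positivity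
  -- pointwise facts
  have hM : ∀ v : E3, 0 < Mw a b v := fun v => by rw [Mw]; positivity
  have hden : ∀ v : E3, 0 < 1 + ε * Mw a b v := fun v => by nlinarith [hM v]
  have hden1 : ∀ v : E3, 1 ≤ 1 + ε * Mw a b v := fun v => by nlinarith [hM v]
  have hFDpos : ∀ v, 0 < FD ε a b v := fun v => div_pos (hM v) (hden v)
  have hFDle : ∀ v, FD ε a b v ≤ Mw a b v := fun v => div_le_self (hM v).le (hden1 v)
  have hMFD : ∀ v, Mw a b v - FD ε a b v ≤ ε * (Mw a b v) ^ 2 := by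
    intro v
    have e : Mw a b v - FD ε a b v = ε * (Mw a b v) ^ 2 / (1 + ε * Mw a b v) := by
      have hd := (hden v).ne'
      rw [FD, eq_div_iff hd, sub_mul, div_mul_cancel₀ _ hd]; ring
    rw [e]
    exact div_le_self (by positivity) (hden1 v)
  -- continuity
  have hMcont : Continuous (Mw a b) := by
    unfold Mw; fun_prop
  have hFDcont : Continuous (FD ε a b) := by
    unfold FD
    exact hMcont.div (by fun_prop) (fun v => (hden v).ne')
  -- integrability
  have intM : Integrable (Mw a b) := Mw_integrable hb
  have intM2 : Integrable fun v : E3 => ‖v‖ ^ 2 * Mw a b v := Mw_integrable2 hb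
  have intMsq : Integrable fun v : E3 => ε * (Mw a b v) ^ 2 := by
    have h := (gauss_integrable (by positivity : (0:ℝ) < 2*b)).const_mul (ε * a ^ 2)
    refine h.congr (Filter.Eventually.of_forall fun v => ?_)
    simp only [Mw]
    rw [show -(2*b) * ‖v‖ ^ 2 = (-b*‖v‖^2) + (-b*‖v‖^2) by ring, Real.exp_add]
    ring
  have intMsq2 : Integrable fun v : E3 => ‖v‖ ^ 2 * (ε * (Mw a b v) ^ 2) := by
    have h := (gauss_integrable2 (by positivity : (0:ℝ) < 2*b)).const_mul (ε * a ^ 2)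
    refine h.congr (Filter.Eventually.of_forall fun v => ?_)
    simp only [Mw]
    rw [show -(2*b) * ‖v‖ ^ 2 = (-b*‖v‖^2) + (-b*‖v‖^2) by ring, Real.exp_add]
    ring
  have intFD : Integrable (FD ε a b) := by
    refine intM.mono' hFDcont.aestronglyMeasurable (Filter.Eventually.of_forall fun v => ?_)
    rw [Real.norm_of_nonneg (hFDpos v).le]; exact hFDle v
  have intFD2 : Integrable fun v : E3 => ‖v‖ ^ 2 * FD ε a b v := by
    refine intM2.mono' ((continuous_norm.pow 2).mul hFDcont).aestronglyMeasurable
      (Filter.Eventually.of_forall fun v => ?_)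
    rw [Real.norm_of_nonneg (mul_nonneg (by positivity) (hFDpos v).le)]
    exact mul_le_mul_of_nonneg_left (hFDle v) (by positivity)
  -- values of the M² integrals
  have hhalf : (π/(2*b)) ^ ((3:ℝ)/2) = κ * (π/b) ^ ((3:ℝ)/2) := by
    rw [show π/(2*b) = (1/2) * (π/b) by ring, Real.mul_rpow (by norm_num) hπb.le, hκdef,
      one_div, Real.inv_rpow two_pos.le, show -(3:ℝ)/2 = -((3:ℝ)/2) by norm_num,
      Real.rpow_neg two_pos.le]
  have hKey : ∫ v : E3, ε * (Mw a b v) ^ 2 = ε * a * κ * G := by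
    have e : ∀ v : E3, ε * (Mw a b v) ^ 2 = (ε * a^2) * exp (-(2*b) * ‖v‖^2) := by
      intro v; simp only [Mw]
      rw [show -(2*b) * ‖v‖ ^ 2 = (-b*‖v‖^2) + (-b*‖v‖^2) by ring, Real.exp_add]; ring
    simp only [e]
    rw [integral_const_mul, gauss_int (by positivity : (0:ℝ) < 2*b), hhalf, hGdef]
    ring
  have hKey2 : ∫ v : E3, ‖v‖ ^ 2 * (ε * (Mw a b v) ^ 2) = 3/(4*b) * (ε * a * κ * G) := by
    have e : ∀ v : E3, ‖v‖^2 * (ε * (Mw a b v) ^ 2)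
        = (ε * a^2) * (‖v‖^2 * exp (-(2*b) * ‖v‖^2)) := by
      intro v; simp only [Mw]
      rw [show -(2*b) * ‖v‖ ^ 2 = (-b*‖v‖^2) + (-b*‖v‖^2) by ring, Real.exp_add]; ring
    simp only [e]
    rw [integral_const_mul, gauss_moment (by positivity : (0:ℝ) < 2*b),
      gauss_int (by positivity : (0:ℝ) < 2*b), hhalf, hGdef]
    field_simp
    ring
  -- moments
  have hD0eq : ∫ v : E3, (Mw a b v - FD ε a b v) = G - ρ := by
    rw [integral_sub intM intFD, int_Mw hb, hmass, ← hGdef]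
  have hD0pos : 0 ≤ G - ρ := by
    rw [← hD0eq]; exact integral_nonneg fun v => sub_nonneg.2 (hFDle v)
  have intMF : Integrable fun v : E3 => Mw a b v - FD ε a b v := intM.sub intFD
  have hD0le : G - ρ ≤ ε * a * κ * G := by
    rw [← hD0eq, ← hKey]
    exact integral_mono intMF intMsq hMFD
  have intMF2 : Integrable fun v : E3 => ‖v‖^2 * Mw a b v - ‖v‖^2 * FD ε a b v :=
    intM2.sub intFD2
  have hD2eq : ∫ v : E3, (‖v‖^2 * Mw a b v - ‖v‖^2 * FD ε a b v) = 3/(2*b)*G - 3*ρ*E := by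
    rw [integral_sub intM2 intFD2, int_Mw2 hb, henergy, ← hGdef]
  have hD2pos : 0 ≤ 3/(2*b)*G - 3*ρ*E := by
    rw [← hD2eq]
    exact integral_nonneg fun v =>
      sub_nonneg.2 (mul_le_mul_of_nonneg_left (hFDle v) (by positivity))
  have hD2le : 3/(2*b)*G - 3*ρ*E ≤ 3/(4*b) * (ε * a * κ * G) := by
    rw [← hD2eq, ← hKey2]
    refine integral_mono intMF2 intMsq2 fun v => ?_
    simp only
    calc ‖v‖^2 * Mw a b v - ‖v‖^2 * FD ε a b v = ‖v‖^2 * (Mw a b v - FD ε a b v) := by ring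
    _ ≤ ‖v‖^2 * (ε * (Mw a b v)^2) := mul_le_mul_of_nonneg_left (hMFD v) (by positivity)
  -- the correction integral I
  have hlogden : ∀ v, 0 ≤ log (1 + ε * Mw a b v) := fun v => log_nonneg (hden1 v)
  have hIpt : ∀ v, FD ε a b v * log (1 + ε * Mw a b v) ≤ ε * (Mw a b v)^2 := by
    intro v
    have h1 : log (1 + ε * Mw a b v) ≤ ε * Mw a b v := by
      have := log_le_sub_one_of_pos (hden v); linarith
    calc FD ε a b v * log (1 + ε * Mw a b v) ≤ Mw a b v * (ε * Mw a b v) :=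
      mul_le_mul (hFDle v) h1 (hlogden v) (hM v).le
    _ = ε * (Mw a b v)^2 := by ring
  have intI : Integrable fun v : E3 => FD ε a b v * log (1 + ε * Mw a b v) := by
    refine intMsq.mono' ?_ (Filter.Eventually.of_forall fun v => ?_)
    · exact (hFDcont.mul ((continuous_const.add (continuous_const.mul hMcont)).log
        (fun v => (hden v).ne'))).aestronglyMeasurable
    · rw [Real.norm_of_nonneg (mul_nonneg (hFDpos v).le (hlogden v))]
      exact hIpt v
  have hIpos : 0 ≤ ∫ v : E3, FD ε a b v * log (1 + ε * Mw a b v) :=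
    integral_nonneg fun v => mul_nonneg (hFDpos v).le (hlogden v)
  have hIle : (∫ v : E3, FD ε a b v * log (1 + ε * Mw a b v)) ≤ ε * a * κ * G := by
    rw [← hKey]; exact integral_mono intI intMsq hIpt
  set I : ℝ := ∫ v : E3, FD ε a b v * log (1 + ε * Mw a b v) with hIdef
  -- entropy of FD
  have hFDent : boltzEnt (FD ε a b) = log a * ρ - b*(3*ρ*E) - I := by
    rw [boltzEnt]
    have hpt : ∀ v : E3, FD ε a b v * log (FD ε a b v)
        = log a * FD ε a b v - b * (‖v‖^2 * FD ε a b v)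
          - FD ε a b v * log (1 + ε * Mw a b v) := by
      intro v
      have h1 : log (FD ε a b v) = (log a + -b*‖v‖^2) - log (1 + ε*Mw a b v) := by
        rw [FD, Real.log_div (hM v).ne' (hden v).ne', Mw,
          Real.log_mul ha.ne' (exp_ne_zero _), Real.log_exp]
      rw [h1]; ring
    simp only [hpt]
    have e1 : ∫ v : E3, (log a * FD ε a b v - b * (‖v‖^2*FD ε a b v)
          - FD ε a b v * log (1+ε*Mw a b v))
        = (∫ v : E3, (log a * FD ε a b v - b * (‖v‖^2*FD ε a b v)))
          - ∫ v : E3, FD ε a b v * log (1+ε*Mw a b v) :=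
      integral_sub ((intFD.const_mul _).sub (intFD2.const_mul _)) intI
    have e2 : ∫ v : E3, (log a * FD ε a b v - b * (‖v‖^2*FD ε a b v))
        = (∫ v : E3, log a * FD ε a b v) - ∫ v : E3, b*(‖v‖^2*FD ε a b v) :=
      integral_sub (intFD.const_mul _) (intFD2.const_mul _)
    rw [e1, e2, integral_const_mul, integral_const_mul, hmass, henergy, ← hIdef]
  -- size bounds
  have hεaκG : ε * a * κ * G ≤ 2/3*G := mul_le_mul_of_nonneg_right hεaκ hGpos.le
  have hGle3 : G ≤ 3*ρ := by linarith
  have hρG : ρ ≤ G := by linarith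
  have htle : 2*b*E ≤ 3 := by
    have h1 : 3*ρ*E*(2*b) ≤ 3/(2*b)*G*(2*b) :=
      mul_le_mul_of_nonneg_right (by linarith) (by positivity)
    have h2 : 3/(2*b)*G*(2*b) = 3*G := by field_simp
    have h3 : ρ*(2*b*E) ≤ ρ*3 := by linarith
    exact le_of_mul_le_mul_left (by linarith) hρ
  have hble : b ≤ 3/(2*E) := by rw [le_div_iff₀ (by positivity)]; linarith
  have htge : 2/3 ≤ 2*b*E := by
    have hq : 3/(2*b)*G - 3*ρ*E ≤ 3/(4*b)*(2/3*G) :=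
      le_trans hD2le (mul_le_mul_of_nonneg_left hεaκG (by positivity))
    have e1 : 3/(4*b)*(2/3*G) = 1/(2*b)*G := by field_simp; ring
    have e2 : 3/(2*b)*G - 1/(2*b)*G = 1/b*G := by field_simp; ring
    have h3 : 1/b*G ≤ 3*ρ*E := by linarith
    have h4 : 1/b*ρ ≤ 1/b*G := mul_le_mul_of_nonneg_left hρG (by positivity)
    have h5 : ρ ≤ 3*ρ*E*b := by
      have h6 := mul_le_mul_of_nonneg_right (le_trans h4 h3) hb.le
      calc ρ = 1/b*ρ*b := by field_simp
      _ ≤ 3*ρ*E*b := h6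
    have h7 : ρ*1 ≤ ρ*(3*E*b) := by linarith
    have h8 := le_of_mul_le_mul_left (by linarith : ρ*1 ≤ ρ*(3*E*b)) hρ
    linarith
  have ha' : a ≤ A := by
    have hinv : (π/b) ^ ((3:ℝ)/2) * (b/π) ^ ((3:ℝ)/2) = 1 := by
      rw [← Real.mul_rpow hπb.le (by positivity),
        show (π/b)*(b/π) = 1 by field_simp, Real.one_rpow]
    have haG : a = G * (b/π) ^ ((3:ℝ)/2) := by
      rw [hGdef, mul_assoc, hinv, mul_one]
    rw [haG, hAdef]
    have h1 : (b/π) ^ ((3:ℝ)/2) ≤ ((3/(2*E))/π) ^ ((3:ℝ)/2) :=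
      Real.rpow_le_rpow (by positivity) (by gcongr) (by norm_num)
    exact mul_le_mul hGle3 h1 (by positivity) (by positivity)
  have hεG : ε * a * κ * G ≤ c₀ * ε := by
    have h1 : ε * a * κ * G ≤ ε * A * 1 * (3*ρ) := by gcongr
    have h2 : ε * A * 1 * (3*ρ) = c₀ * ε := by rw [hc0def]; ring
    linarith
  have hD2le' : 3/(2*b)*G - 3*ρ*E ≤ 3*E*(c₀*ε) := by
    have h1 : 3/(4*b) ≤ 3*E := by
      rw [div_le_iff₀ (by positivity)]
      linarith [htge]
    calc 3/(2*b)*G - 3*ρ*E ≤ 3/(4*b)*(ε*a*κ*G) := hD2le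
    _ ≤ 3*E*(c₀*ε) := mul_le_mul h1 hεG (by positivity) (by positivity)
  have hD0le' : G - ρ ≤ c₀ * ε := le_trans hD0le hεG
  have hIle' : I ≤ c₀ * ε := le_trans hIle hεG
  -- bounds on t = 2bE
  have hkeyt : ρ*(2*b*E - 1) = (G - ρ) - (2*b/3)*(3/(2*b)*G - 3*ρ*E) := by
    field_simp; ring
  have htabs_up : ρ*(2*b*E - 1) ≤ c₀*ε := by
    have h0 : 0 ≤ (2*b/3)*(3/(2*b)*G - 3*ρ*E) := mul_nonneg (by positivity) hD2pos
    linarith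
  have htabs_lo : -(4*(c₀*ε)) ≤ ρ*(2*b*E - 1) := by
    have h1 : 2*b/3 ≤ 1/E := by
      rw [div_le_div_iff₀ (by norm_num) hE]; linarith
    have h2 : (2*b/3)*(3/(2*b)*G - 3*ρ*E) ≤ (1/E)*(3*E*(c₀*ε)) :=
      mul_le_mul h1 hD2le' hD2pos (by positivity)
    have h3 : (1/E)*(3*E*(c₀*ε)) = 3*(c₀*ε) := by field_simp
    linarith
  have hc0ε : 0 ≤ c₀*ε := by positivity
  have habs : |ρ*(2*b*E - 1)| ≤ 4*(c₀*ε) := abs_le.2 ⟨htabs_lo, by linarith⟩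
  have hlt := loglin (t := 2*b*E) htge
  have hlogtabs : |ρ * log (2*b*E)| ≤ 6*(c₀*ε) := by
    rw [abs_mul, abs_of_pos hρ]
    have h1 : ρ * |log (2*b*E)| ≤ ρ * (3/2 * |2*b*E - 1|) :=
      mul_le_mul_of_nonneg_left hlt hρ.le
    have h2 : ρ * |2*b*E - 1| ≤ 4*(c₀*ε) := by
      rw [← abs_of_pos hρ, ← abs_mul]; exact habs
    linarith
  have hltabs := abs_le.1 hlogtabs
  have htabs' := abs_le.1 habs
  -- log G bounds
  have hlogρG : log ρ ≤ log G := Real.log_le_log hρ hρG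
  have hlgpos : 0 ≤ ρ*(log G - log ρ) := mul_nonneg hρ.le (by linarith)
  have hlgle : ρ*(log G - log ρ) ≤ c₀*ε := by
    have h1 : log G - log ρ = log (G/ρ) := (Real.log_div hGpos.ne' hρ.ne').symm
    have h2 : log (G/ρ) ≤ G/ρ - 1 := log_le_sub_one_of_pos (by positivity)
    have h3 : ρ*(G/ρ - 1) = G - ρ := by field_simp
    calc ρ*(log G - log ρ) = ρ * log (G/ρ) := by rw [h1]
    _ ≤ ρ*(G/ρ - 1) := mul_le_mul_of_nonneg_left h2 hρ.le
    _ = G - ρ := h3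
    _ ≤ c₀*ε := hD0le'
  -- entropy of M0
  have h2E : (0:ℝ) < 1/(2*E) := by positivity
  have ha₀ : (0:ℝ) < ρ * (2*π*E) ^ (-(3:ℝ)/2) := by positivity
  have hM0 : M0 ρ E = Mw (ρ * (2*π*E) ^ (-(3:ℝ)/2)) (1/(2*E)) := by
    funext v; unfold M0 Mw
    rw [show -‖v‖^2/(2*E) = -(1/(2*E)) * ‖v‖^2 by ring]
  have hmassM0 : (ρ * (2*π*E) ^ (-(3:ℝ)/2)) * (π/(1/(2*E))) ^ ((3:ℝ)/2) = ρ := by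
    rw [show π/(1/(2*E)) = 2*π*E by field_simp]
    rw [mul_assoc, ← Real.rpow_add (by positivity)]
    norm_num
  have hEnt0 : boltzEnt (M0 ρ E) = (log (ρ * (2*π*E) ^ (-(3:ℝ)/2)) - 3/2) * ρ := by
    rw [hM0, entMw ha₀ h2E, hmassM0]
  -- log identities
  have hla : log G = log a + (3:ℝ)/2 * log (π/b) := by
    rw [hGdef, Real.log_mul ha.ne' (ne_of_gt (Real.rpow_pos_of_pos hπb _)),
      Real.log_rpow hπb]
  have hla₀ : log (ρ * (2*π*E) ^ (-(3:ℝ)/2))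
      = log ρ + (-(3:ℝ)/2) * log (2*π*E) := by
    rw [Real.log_mul hρ.ne' (ne_of_gt (Real.rpow_pos_of_pos (by positivity) _)),
      Real.log_rpow (by positivity)]
  have hlt2 : log (2*π*E) = log (2*b*E) + log (π/b) := by
    rw [← Real.log_mul (by positivity) (ne_of_gt hπb),
      show (2*b*E)*(π/b) = 2*π*E by field_simp]
  -- final assembly
  rw [hEnt0, hFDent]
  have heq : (log (ρ * (2*π*E) ^ (-(3:ℝ)/2)) - 3/2) * ρ - (log a * ρ - b*(3*ρ*E) - I)
      = -(ρ*(log G - log ρ)) - 3/2*(ρ * log (2*b*E)) + 3/2*(ρ*(2*b*E - 1)) + I := by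
    linear_combination ρ * hla₀ + ρ * hla - (3:ℝ)/2 * ρ * hlt2
  rw [heq, abs_le]
  constructor
  · linarith [hlgpos, hlgle, hltabs.1, hltabs.2, htabs'.1, htabs'.2, hIpos, hIle', hc0ε, hε.le]
  · linarith [hlgpos, hlgle, hltabs.1, hltabs.2, htabs'.1, htabs'.2, hIpos, hIle', hc0ε, hε.le]


end
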